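/- Let κ : ℝ → ℝ be continuous and suppose there exist a < b and a Jacobi solution z for κ that is not identically zero with z(a) = z(b) = 0. Then there exist T > 0 with [a,b] ⊆ [−T,T] and a piecewise C² function f : [−T,T] → ℝ such that I_κ(f) < 0. -/

import Mathlib

open Set

/-- A Jacobi solution for `κ` on `ℝ`: a `C²` function with `z'' + κ z = 0`. -/
def IsJacobi (κ z : ℝ → ℝ) : Prop :=
  ContDiff ℝ 2 z ∧ ∀ t, deriv (deriv z) t + κ t * z t = 0

/-- `f` is piecewise `C²` on `[a,b]`: continuous, and there is a partition
`a = t₀ < t₁ < ⋯ < tₙ = b` such that `f` is `C²` on each `[tᵢ, tᵢ₊₁]`. -/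
def PiecewiseC2On (f : ℝ → ℝ) (a b : ℝ) : Prop :=
  ContinuousOn f (Set.Icc a b) ∧
    ∃ (n : ℕ) (t : ℕ → ℝ), 0 < n ∧ t 0 = a ∧ t n = b ∧
      (∀ i, i < n → t i < t (i + 1)) ∧
      (∀ i, i < n → ContDiffOn ℝ 2 f (Set.Icc (t i) (t (i + 1))))

/-- The index form `I_κ(f) = ∫_a^b ((f')² - κ f²)`; the derivative `deriv f`
agrees a.e. with the (piecewise) derivative of `f`. -/
noncomputable def indexForm (κ f : ℝ → ℝ) (a b : ℝ) : ℝ :=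
  ∫ t in a..b, ((deriv f t) ^ 2 - κ t * (f t) ^ 2)

/-- Auxiliary: the RHS of the first-order system associated to the Jacobi
equation is Lipschitz. -/
lemma jacobi_rhs_lipschitz (M c : ℝ) (hc : |c| ≤ M) :
    LipschitzWith (⟨max 1 M, le_trans zero_le_one (le_max_left 1 M)⟩ : NNReal)
      (fun p : ℝ × ℝ => ((p.2 : ℝ), c * p.1)) := by
  apply LipschitzWith.of_dist_le_mul
  intro p q
  rw [Prod.dist_eq, Prod.dist_eq]
  simp only [Real.dist_eq, NNReal.coe_mk]
  have h0 : (0:ℝ) ≤ max 1 M := le_trans zero_le_one (le_max_left 1 M)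
  have habs : (0:ℝ) ≤ max |p.1 - q.1| |p.2 - q.2| :=
    le_trans (abs_nonneg _) (le_max_left _ _)
  apply max_le
  · calc |p.2 - q.2| ≤ max |p.1 - q.1| |p.2 - q.2| := le_max_right _ _
      _ ≤ max 1 M * max |p.1 - q.1| |p.2 - q.2| :=
        le_mul_of_one_le_left habs (le_max_left 1 M)
  · rw [← mul_sub, abs_mul]
    exact mul_le_mul (hc.trans (le_max_right 1 M))
      (le_max_left _ _) (abs_nonneg _) h0

/-- A nontrivial Jacobi solution vanishing at `b` has nonzero derivative
at `b` (uniqueness of solutions of ODEs). -/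
lemma jacobi_deriv_ne_zero (κ : ℝ → ℝ) (hκ : Continuous κ) (z : ℝ → ℝ)
    (hz : IsJacobi κ z) (hznz : ∃ t, z t ≠ 0) (b : ℝ) (hzb : z b = 0) :
    deriv z b ≠ 0 := by
  intro hzb'
  obtain ⟨t₀, ht₀⟩ := hznz
  set c := min b t₀ - 1 with hcdef
  set d := max b t₀ + 1 with hddef
  have hcb : c < b := by have := min_le_left b t₀; simp only [hcdef]; linarith
  have hbd : b < d := by have := le_max_left b t₀; simp only [hddef]; linarith
  have hct : c ≤ t₀ := by have := min_le_right b t₀; simp only [hcdef]; linarith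
  have htd : t₀ ≤ d := by have := le_max_right b t₀; simp only [hddef]; linarith
  have hcd : c ≤ d := le_trans (le_of_lt hcb) (le_of_lt hbd)
  obtain ⟨M, hM⟩ := isCompact_Icc.exists_bound_of_continuousOn
    (s := Icc c d) hκ.continuousOn
  simp only [Real.norm_eq_abs] at hM
  set κ' : ℝ → ℝ := fun t => κ (max c (min d t)) with hκ'def
  have hκ'κ : ∀ t ∈ Icc c d, κ' t = κ t := by
    intro t ht
    simp only [hκ'def]
    rw [min_eq_right ht.2, max_eq_right ht.1]
  have hκ'M : ∀ t, |κ' t| ≤ M := by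
    intro t
    apply hM
    constructor
    · exact le_max_left _ _
    · exact max_le hcd (min_le_left _ _)
  set v : ℝ → ℝ × ℝ → ℝ × ℝ := fun t p => (p.2, -κ' t * p.1) with hvdef
  have hv : ∀ t, LipschitzWith
      (⟨max 1 M, le_trans zero_le_one (le_max_left 1 M)⟩ : NNReal) (v t) := by
    intro t
    exact jacobi_rhs_lipschitz M (-κ' t) (by rw [abs_neg]; exact hκ'M t)
  have hd1 : Differentiable ℝ z := hz.1.differentiable two_ne_zero
  have hd2 : Differentiable ℝ (deriv z) := by
    have := (contDiff_succ_iff_deriv (n := 1)).mp (by exact_mod_cast hz.1)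
    exact this.2.2.differentiable one_ne_zero
  have hκz : ∀ t, deriv (deriv z) t = -(κ t * z t) := fun t => by linarith [hz.2 t]
  set Z : ℝ → ℝ × ℝ := fun t => (z t, deriv z t) with hZdef
  have hZcont : ContinuousOn Z (Icc c d) :=
    (hd1.continuous.prodMk (hz.1.continuous_deriv one_le_two)).continuousOn
  have hZ' : ∀ t ∈ Ioo c d, HasDerivAt Z (v t (Z t)) t := by
    intro t ht
    have h1 : HasDerivAt z (deriv z t) t := (hd1 t).hasDerivAt
    have h2 : HasDerivAt (deriv z) (deriv (deriv z) t) t := (hd2 t).hasDerivAt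
    have h3 : HasDerivAt Z (deriv z t, deriv (deriv z) t) t := h1.prodMk h2
    have : v t (Z t) = (deriv z t, deriv (deriv z) t) := by
      simp only [hvdef, hZdef]
      rw [hκ'κ t (Ioo_subset_Icc_self ht), hκz t]
      ring_nf
    rw [this]
    exact h3
  have h0' : ∀ t ∈ Ioo c d,
      HasDerivAt (fun _ : ℝ => ((0:ℝ), (0:ℝ))) (v t ((0:ℝ), (0:ℝ))) t := by
    intro t ht
    have : v t ((0:ℝ), (0:ℝ)) = ((0:ℝ), (0:ℝ)) := by simp [hvdef]
    rw [this]
    exact hasDerivAt_const t _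
  have heq : EqOn Z (fun _ => ((0:ℝ), (0:ℝ))) (Icc c d) := by
    apply ODE_solution_unique_of_mem_Icc (s := fun _ => (univ : Set (ℝ × ℝ)))
      (fun t _ => (hv t).lipschitzOnWith) ⟨hcb, hbd⟩ hZcont hZ'
      (fun _ _ => trivial) continuousOn_const h0' (fun _ _ => trivial)
    simp only [hZdef, hzb, hzb']
  have := heq ⟨hct, htd⟩
  apply ht₀
  have : z t₀ = ((0:ℝ), (0:ℝ)).1 := congrArg Prod.fst this
  simpa using this

/-- A pair of conjugate points (a nontrivial Jacobi solution vanishing at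
`a < b`) produces a piecewise `C²` test function of strictly negative index on
some interval `[-T,T] ⊇ [a,b]`. -/
theorem conjugate_points_negative_index (κ : ℝ → ℝ) (hκ : Continuous κ)
    (a b : ℝ) (hab : a < b) (z : ℝ → ℝ) (hz : IsJacobi κ z)
    (hznz : ∃ t, z t ≠ 0) (hza : z a = 0) (hzb : z b = 0) :
    ∃ T : ℝ, 0 < T ∧ Set.Icc a b ⊆ Set.Icc (-T) T ∧
      ∃ f : ℝ → ℝ, PiecewiseC2On f (-T) T ∧ indexForm κ f (-T) T < 0 := by
  -- basic setup
  have hd1 : Differentiable ℝ z := hz.1.differentiable two_ne_zero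
  have hd2 : Differentiable ℝ (deriv z) := by
    have := (contDiff_succ_iff_deriv (n := 1)).mp (by exact_mod_cast hz.1)
    exact this.2.2.differentiable one_ne_zero
  have hzc : Continuous z := hd1.continuous
  have hz'c : Continuous (deriv z) := hz.1.continuous_deriv one_le_two
  have hκz : ∀ t, deriv (deriv z) t = -(κ t * z t) := fun t => by linarith [hz.2 t]
  have hz'b : deriv z b ≠ 0 := jacobi_deriv_ne_zero κ hκ z hz hznz b hzb
  set T : ℝ := max |a| |b| + 1 with hTdef
  have hT0 : 0 < T := by positivity
  have hTa : -T < a := by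
    have h1 : |a| ≤ max |a| |b| := le_max_left _ _
    have h2 : -|a| ≤ a := neg_abs_le a
    simp only [hTdef]; linarith
  have hbT : b < T := by
    have h1 : |b| ≤ max |a| |b| := le_max_right _ _
    have h2 : b ≤ |b| := le_abs_self b
    simp only [hTdef]; linarith
  have hsub : Icc a b ⊆ Icc (-T) T :=
    Icc_subset_Icc (le_of_lt hTa) (le_of_lt hbT)
  have hba : b - a ≠ 0 := by linarith
  set m : ℝ := (b - a)⁻¹ with hmdef
  have hm : (b - a) * m = 1 := mul_inv_cancel₀ hba
  set ℓ : ℝ → ℝ := fun t => (t - a) * m with hℓdef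
  have hℓa : ℓ a = 0 := by simp [hℓdef]
  have hℓb : ℓ b = 1 := by simp only [hℓdef]; exact hm
  have hℓc : Continuous ℓ := by fun_prop
  set C1 : ℝ := ∫ t in a..b, (m ^ 2 - κ t * (ℓ t) ^ 2) with hC1def
  set C2 : ℝ := ∫ t in b..T, κ t with hC2def
  set C : ℝ := C1 - C2 with hCdef
  set δ : ℝ := (|C| + 1)⁻¹ with hδdef
  have hδ0 : 0 < δ := by positivity
  have hδ1 : δ * (|C| + 1) = 1 := inv_mul_cancel₀ (by positivity)
  set ε : ℝ := -(deriv z b) * δ with hεdef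
  set f : ℝ → ℝ := fun t =>
    if t ≤ a then 0 else if t ≤ b then z t + ε * ℓ t else ε with hfdef
  -- pointwise description of f
  have hfL : ∀ t, t ≤ a → f t = 0 := by
    intro t ht; simp only [hfdef]; rw [if_pos ht]
  have hfM : ∀ t, a < t → t ≤ b → f t = z t + ε * ℓ t := by
    intro t ht1 ht2; simp only [hfdef]; rw [if_neg (not_le.mpr ht1), if_pos ht2]
  have hfR : ∀ t, b < t → f t = ε := by
    intro t ht
    simp only [hfdef]
    rw [if_neg (not_le.mpr (lt_trans hab ht)), if_neg (not_le.mpr ht)]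
  -- continuity of f
  have hcont : Continuous f := by
    have hinner : Continuous (fun t => if t ≤ b then z t + ε * ℓ t else ε) := by
      apply Continuous.if_le (by fun_prop) continuous_const
        continuous_id continuous_const
      intro x hx
      rw [show x = b from hx, hzb, hℓb]; ring
    simp only [hfdef]
    apply Continuous.if_le continuous_const hinner continuous_id continuous_const
    intro x hx
    rw [show x = a from hx, if_pos (le_of_lt hab), hza, hℓa]; ring
  -- local derivative computations
  have hdL : ∀ t ∈ Ioo (-T) a, deriv f t = 0 ∧ f t = 0 := by
    intro t ht
    have hev : f =ᶠ[nhds t] (fun _ => (0:ℝ)) :=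
      Filter.eventuallyEq_of_mem (Iio_mem_nhds ht.2) (fun x hx => hfL x (le_of_lt hx))
    exact ⟨hev.deriv_eq.trans (deriv_const _ _), hfL t (le_of_lt ht.2)⟩
  have hdM : ∀ t ∈ Ioo a b,
      deriv f t = deriv z t + ε * m ∧ f t = z t + ε * ℓ t := by
    intro t ht
    have hev : f =ᶠ[nhds t] (fun t => z t + ε * ℓ t) :=
      Filter.eventuallyEq_of_mem (Ioo_mem_nhds ht.1 ht.2)
        (fun x hx => hfM x hx.1 (le_of_lt hx.2))
    have hder : HasDerivAt (fun t => z t + ε * ℓ t) (deriv z t + ε * m) t := by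
      have h1 : HasDerivAt (fun x : ℝ => ε * ((x - a) * m)) (ε * (1 * m)) t :=
        (((hasDerivAt_id t).sub_const a).mul_const m).const_mul ε
      rw [one_mul] at h1
      exact (hd1 t).hasDerivAt.add h1
    exact ⟨hev.deriv_eq.trans hder.deriv, hfM t ht.1 (le_of_lt ht.2)⟩
  have hdR : ∀ t ∈ Ioi b, deriv f t = 0 ∧ f t = ε := by
    intro t ht
    have hev : f =ᶠ[nhds t] (fun _ => ε) :=
      Filter.eventuallyEq_of_mem (Ioi_mem_nhds ht) (fun x hx => hfR x hx)
    exact ⟨hev.deriv_eq.trans (deriv_const _ _), hfR t ht⟩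
  -- the integrand
  set F : ℝ → ℝ := fun t => (deriv f t) ^ 2 - κ t * (f t) ^ 2 with hFdef
  have hne : ∀ c : ℝ, ∀ᵐ x : ℝ ∂MeasureTheory.volume, x ≠ c := by
    intro c
    rw [MeasureTheory.ae_iff]
    simp [Real.volume_singleton]
  -- ae identification on the three pieces
  have haeL : ∀ᵐ x : ℝ ∂MeasureTheory.volume, x ∈ uIoc (-T) a → F x = 0 := by
    filter_upwards [hne a] with x hx hmem
    rw [uIoc_of_le (le_of_lt hTa)] at hmem
    have hx' : x ∈ Ioo (-T) a := ⟨hmem.1, lt_of_le_of_ne hmem.2 hx⟩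
    obtain ⟨h1, h2⟩ := hdL x hx'
    simp [hFdef, h1, h2]
  have haeM : ∀ᵐ x : ℝ ∂MeasureTheory.volume, x ∈ uIoc a b →
      F x = (deriv z x + ε * m) ^ 2 - κ x * (z x + ε * ℓ x) ^ 2 := by
    filter_upwards [hne b] with x hx hmem
    rw [uIoc_of_le (le_of_lt hab)] at hmem
    have hx' : x ∈ Ioo a b := ⟨hmem.1, lt_of_le_of_ne hmem.2 hx⟩
    obtain ⟨h1, h2⟩ := hdM x hx'
    simp [hFdef, h1, h2]
  have haeR : ∀ᵐ x : ℝ ∂MeasureTheory.volume, x ∈ uIoc b T →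
      F x = -(κ x * ε ^ 2) := by
    apply Filter.Eventually.of_forall
    intro x hmem
    rw [uIoc_of_le (le_of_lt hbT)] at hmem
    obtain ⟨h1, h2⟩ := hdR x hmem.1
    simp [hFdef, h1, h2]
  -- integrability
  have hGc : Continuous (fun t => (deriv z t + ε * m) ^ 2 - κ t * (z t + ε * ℓ t) ^ 2) := by
    fun_prop
  have hGi : IntervalIntegrable (fun t => (deriv z t + ε * m) ^ 2 - κ t * (z t + ε * ℓ t) ^ 2)
      MeasureTheory.volume a b := hGc.intervalIntegrable a b
  have hH3i : IntervalIntegrable (fun t => -(κ t * ε ^ 2)) MeasureTheory.volume b T :=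
    (by fun_prop : Continuous fun t => -(κ t * ε ^ 2)).intervalIntegrable b T
  have hcongr_int : ∀ (g : ℝ → ℝ) (u v : ℝ),
      IntervalIntegrable g MeasureTheory.volume u v →
      (∀ᵐ x : ℝ ∂MeasureTheory.volume, x ∈ uIoc u v → F x = g x) →
      IntervalIntegrable F MeasureTheory.volume u v := by
    intro g u v hg he
    rw [intervalIntegrable_iff] at *
    have h2 : F =ᵐ[MeasureTheory.volume.restrict (uIoc u v)] g :=
      (MeasureTheory.ae_restrict_iff' measurableSet_uIoc).mpr he
    exact hg.congr h2.symm
  have hFiL : IntervalIntegrable F MeasureTheory.volume (-T) a :=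
    hcongr_int 0 _ _ intervalIntegrable_const haeL
  have hFiM : IntervalIntegrable F MeasureTheory.volume a b := hcongr_int _ _ _ hGi haeM
  have hFiR : IntervalIntegrable F MeasureTheory.volume b T := hcongr_int _ _ _ hH3i haeR
  -- evaluation on the three pieces
  have E1 : ∫ t in (-T)..a, F t = 0 := by
    rw [intervalIntegral.integral_congr_ae haeL]
    simp
  have E3 : ∫ t in b..T, F t = -(C2 * ε ^ 2) := by
    rw [intervalIntegral.integral_congr_ae haeR, hC2def]
    rw [intervalIntegral.integral_neg, intervalIntegral.integral_mul_const]
  -- the middle piece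
  have hPi : IntervalIntegrable (fun t => (deriv z t) ^ 2 - κ t * z t ^ 2)
      MeasureTheory.volume a b :=
    (by fun_prop : Continuous fun t => (deriv z t) ^ 2 - κ t * z t ^ 2).intervalIntegrable a b
  have hQi : IntervalIntegrable (fun t => m * deriv z t - κ t * (z t * ℓ t))
      MeasureTheory.volume a b :=
    (by fun_prop : Continuous fun t => m * deriv z t - κ t * (z t * ℓ t)).intervalIntegrable a b
  have hRi : IntervalIntegrable (fun t => m ^ 2 - κ t * (ℓ t) ^ 2)
      MeasureTheory.volume a b :=
    (by fun_prop : Continuous fun t => m ^ 2 - κ t * (ℓ t) ^ 2).intervalIntegrable a b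
  have hPval : ∫ t in a..b, ((deriv z t) ^ 2 - κ t * z t ^ 2) = 0 := by
    have := intervalIntegral.integral_eq_sub_of_hasDerivAt
      (f := fun t => z t * deriv z t)
      (f' := fun t => (deriv z t) ^ 2 - κ t * z t ^ 2) (a := a) (b := b)
      (fun t _ => by
        have h1 : HasDerivAt (fun t => z t * deriv z t)
            (deriv z t * deriv z t + z t * deriv (deriv z) t) t :=
          (hd1 t).hasDerivAt.mul (hd2 t).hasDerivAt
        refine h1.congr_deriv ?_
        rw [hκz t]; ring) hPi
    rw [this]; simp [hza, hzb]
  have hQval : ∫ t in a..b, (m * deriv z t - κ t * (z t * ℓ t)) = deriv z b := by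
    have := intervalIntegral.integral_eq_sub_of_hasDerivAt
      (f := fun t => deriv z t * ℓ t)
      (f' := fun t => m * deriv z t - κ t * (z t * ℓ t)) (a := a) (b := b)
      (fun t _ => by
        have hℓd : HasDerivAt ℓ m t := by
          have := ((hasDerivAt_id t).sub_const a).mul_const m
          rw [one_mul] at this
          exact this
        have h1 : HasDerivAt (fun t => deriv z t * ℓ t)
            (deriv (deriv z) t * ℓ t + deriv z t * m) t :=
          (hd2 t).hasDerivAt.mul hℓd
        refine h1.congr_deriv ?_
        rw [hκz t]; ring) hQi
    rw [this]; simp [hℓa, hℓb]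
  have E2 : ∫ t in a..b, F t = 2 * ε * deriv z b + ε ^ 2 * C1 := by
    rw [intervalIntegral.integral_congr_ae haeM]
    have hid : (fun t => (deriv z t + ε * m) ^ 2 - κ t * (z t + ε * ℓ t) ^ 2)
        = fun t => ((deriv z t) ^ 2 - κ t * z t ^ 2)
          + ((2 * ε) * (m * deriv z t - κ t * (z t * ℓ t))
            + ε ^ 2 * (m ^ 2 - κ t * (ℓ t) ^ 2)) := by
      funext t; ring
    rw [hid]
    rw [intervalIntegral.integral_add hPi ((hQi.const_mul _).add (hRi.const_mul _)),
      intervalIntegral.integral_add (hQi.const_mul _) (hRi.const_mul _),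
      intervalIntegral.integral_const_mul, intervalIntegral.integral_const_mul,
      hPval, hQval]
    simp only [hC1def]
    ring
  -- assemble
  have hIval : indexForm κ f (-T) T = 2 * ε * deriv z b + ε ^ 2 * C := by
    have hsplit1 : (∫ t in (-T)..a, F t) + ∫ t in a..b, F t = ∫ t in (-T)..b, F t :=
      intervalIntegral.integral_add_adjacent_intervals hFiL hFiM
    have hsplit2 : (∫ t in (-T)..b, F t) + ∫ t in b..T, F t = ∫ t in (-T)..T, F t :=
      intervalIntegral.integral_add_adjacent_intervals (hFiL.trans hFiM) hFiR
    have : indexForm κ f (-T) T = ∫ t in (-T)..T, F t := by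
      rw [hFdef]; rfl
    rw [this, ← hsplit2, ← hsplit1, E1, E2, E3]
    simp only [hCdef]
    ring
  -- negativity
  have hneg : indexForm κ f (-T) T < 0 := by
    rw [hIval]
    have hkey : 2 * ε * deriv z b + ε ^ 2 * C
        = (deriv z b) ^ 2 * δ * (δ * C - 2) := by
      simp only [hεdef]; ring
    rw [hkey]
    have hz2 : 0 < (deriv z b) ^ 2 := by positivity
    have h1 : 0 < (deriv z b) ^ 2 * δ := mul_pos hz2 hδ0
    have h2 : δ * C ≤ δ * |C| := mul_le_mul_of_nonneg_left (le_abs_self C) (le_of_lt hδ0)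
    have h3 : δ * C - 2 < 0 := by nlinarith [hδ1, hδ0]
    exact mul_neg_of_pos_of_neg h1 h3
  have hℓ2 : ContDiff ℝ 2 ℓ := by
    rw [hℓdef]
    exact (contDiff_id.sub contDiff_const).mul contDiff_const
  refine ⟨T, hT0, hsub, f, ⟨hcont.continuousOn, 3,
    (fun i => if i = 0 then -T else if i = 1 then a else if i = 2 then b else T),
    by norm_num, by norm_num, by norm_num, ?_, ?_⟩, hneg⟩
  · intro i hi
    interval_cases i
    · simpa using hTa
    · simpa using hab
    · simpa using hbT
  · intro i hi
    interval_cases i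
    · simp only [reduceIte, Nat.one_ne_zero]
      norm_num
      exact contDiffOn_const.congr (fun x hx => hfL x hx.2)
    · norm_num
      refine ((hz.1.add ((contDiff_const (c := ε)).mul hℓ2)).contDiffOn).congr (fun x hx => ?_)
      by_cases hxa : x ≤ a
      · have hxa' : x = a := le_antisymm hxa hx.1
        subst hxa'
        rw [hfL x le_rfl, hza, hℓa]; ring
      · exact hfM x (not_le.mp hxa) hx.2
    · norm_num
      refine (contDiffOn_const (c := ε)).congr (fun x hx => ?_)
      by_cases hxb : x ≤ b
      · have hxb' : x = b := le_antisymm hxb hx.1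
        subst hxb'
        rw [hfM x hab le_rfl, hzb, hℓb]; ring
      · exact hfR x (not_le.mp hxb)
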